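/- If m ≡ 1 (mod 4) and n is even, then the necklace count N(n,m) is odd. -/

import Mathlib

/-- The cyclic left shift on `Fin n → α`: `(x_1,…,x_n) ↦ (x_2,…,x_n,x_1)`. -/
def cycShift {α : Type*} {n : ℕ} (x : Fin n → α) : Fin n → α :=
  fun i => if h : (i : ℕ) + 1 < n then x ⟨(i : ℕ) + 1, h⟩
           else x ⟨0, Nat.lt_of_le_of_lt (Nat.zero_le _) i.isLt⟩

open Finset
open Fin.NatCast Fin.CommRing


/-- If `M ≡ 1 (mod 4)` then `2^(i+2) ∣ M^(2^i) - 1`. -/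
lemma pow_two_pow_sub_one (M : ℕ) (hM : M % 4 = 1) (i : ℕ) :
    2 ^ (i + 2) ∣ M ^ (2 ^ i) - 1 := by
  have hM1 : 1 ≤ M := by omega
  induction i with
  | zero =>
    simpa using Nat.dvd_of_mod_eq_zero (show (M - 1) % 4 = 0 by omega)
  | succ i ih =>
    set a := M ^ (2 ^ i) with ha
    have h1 : 1 ≤ a := Nat.one_le_pow _ _ (by omega)
    have key : M ^ (2 ^ (i + 1)) - 1 = (a - 1) * (a + 1) := by
      have h2 : M ^ (2 ^ (i + 1)) = a * a := by
        rw [ha, ← pow_add]; ring_nf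
      have h3 : 1 ≤ a * a := Nat.one_le_iff_ne_zero.2 (by positivity)
      zify [h1, h3, h2]; ring
    rw [key, pow_succ]
    have hodd : M % 2 = 1 := by omega
    have heven : 2 ∣ a + 1 := by
      have : a % 2 = 1 % 2 := by rw [ha, Nat.pow_mod, hodd, one_pow]
      omega
    calc 2 ^ (i + 2) * 2 ∣ (a - 1) * (a + 1) := mul_dvd_mul ih heven
    _ = _ := rfl

/-- If `m ≡ 1 (mod 4)` and `2^j ∣ d` then `2^(j+2) ∣ m^d - 1`. -/
lemma dvd_pow_sub_one (m : ℕ) (hm : m % 4 = 1) (j d : ℕ) (hd : 2 ^ j ∣ d) :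
    2 ^ (j + 2) ∣ m ^ d - 1 := by
  obtain ⟨u, rfl⟩ := hd
  have hmu : (m ^ u) % 4 = 1 := by
    rw [Nat.pow_mod, hm, one_pow]; rfl
  have := pow_two_pow_sub_one (m ^ u) hmu j
  rwa [← pow_mul, mul_comm u (2^j)] at this

/-- If `2^b ∣ k`, `1 ≤ b`, `k ≠ 0`, then `2^(b-1) ∣ φ k`. -/
lemma two_pow_dvd_totient (b k : ℕ) (hb : 1 ≤ b) (h : 2 ^ b ∣ k) (hk : k ≠ 0) :
    2 ^ (b - 1) ∣ Nat.totient k := by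
  set c := k.factorization 2 with hc
  have hbc : b ≤ c := (Nat.Prime.pow_dvd_iff_le_factorization Nat.prime_two hk).1 h
  have hco : Nat.Coprime (2 ^ c) (ordCompl[2] k) :=
    Nat.Coprime.pow_left _ (Nat.coprime_ordCompl Nat.prime_two hk)
  have hk2 : k = 2 ^ c * ordCompl[2] k := (Nat.ordProj_mul_ordCompl_eq_self k 2).symm
  rw [hk2, Nat.totient_mul hco, Nat.totient_prime_pow Nat.prime_two (by omega)]
  exact Dvd.dvd.mul_right (dvd_mul_of_dvd_left (pow_dvd_pow 2 (by omega)) _) _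

/-- Each divisor-sum term is divisible by `2^(a+1)` where `a = v₂(n)`. -/
lemma term_dvd (m n d : ℕ) (hm : m % 4 = 1) (hn0 : n ≠ 0) (hd : d ∣ n) (hd0 : d ≠ 0) :
    2 ^ (n.factorization 2 + 1) ∣ Nat.totient (n / d) * (m ^ d - 1) := by
  set a := n.factorization 2 with ha
  set i := d.factorization 2 with hi
  by_cases hcase : a ≤ i
  · -- 2^a ∣ d, so 2^(a+2) ∣ m^d - 1
    have h2a : 2 ^ a ∣ d := dvd_trans (pow_dvd_pow 2 hcase) (Nat.ordProj_dvd d 2)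
    have := dvd_pow_sub_one m hm a d h2a
    exact Dvd.dvd.mul_left (dvd_trans (pow_dvd_pow 2 (by omega)) this) _
  · push_neg at hcase
    have hnd0 : n / d ≠ 0 := by
      have := Nat.div_pos (Nat.le_of_dvd (Nat.pos_of_ne_zero hn0) hd) (Nat.pos_of_ne_zero hd0)
      omega
    have hfac : (n / d).factorization 2 = a - i := by
      rw [Nat.factorization_div hd]; simp [ha, hi]
    have h1 : 2 ^ (a - i) ∣ n / d := by
      rw [← hfac]; exact Nat.ordProj_dvd _ 2
    have h2 : 2 ^ (a - i - 1) ∣ Nat.totient (n / d) :=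
      two_pow_dvd_totient (a - i) _ (by omega) h1 hnd0
    have h3 : 2 ^ (i + 2) ∣ m ^ d - 1 :=
      dvd_pow_sub_one m hm i d (Nat.ordProj_dvd d 2)
    have : 2 ^ (a - i - 1) * 2 ^ (i + 2) ∣ Nat.totient (n / d) * (m ^ d - 1) :=
      mul_dvd_mul h2 h3
    rwa [← pow_add, show a - i - 1 + (i + 2) = a + 1 by omega] at this

/-- The key arithmetic: from the Burnside identity, `N` is odd. -/
lemma main_arith (m n N : ℕ) (hm : m % 4 = 1) (hn : Even n) (hn0 : 0 < n)
    (hB : N * n = ∑ k ∈ range n, m ^ Nat.gcd n k) : Odd N := by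
  classical
  set a := n.factorization 2 with ha
  have hn0' : n ≠ 0 := hn0.ne'
  have ha1 : 1 ≤ a := by
    rw [ha]
    exact (Nat.Prime.pow_dvd_iff_le_factorization Nat.prime_two hn0').1
      (by simpa using hn.two_dvd)
  -- group the Burnside sum by gcd value
  have hgroup : ∑ k ∈ range n, m ^ Nat.gcd n k
      = ∑ d ∈ n.divisors, Nat.totient (n / d) * m ^ d := by
    rw [← Finset.sum_fiberwise_of_maps_to (g := fun k => Nat.gcd n k)
      (fun k _ => Nat.mem_divisors.2 ⟨Nat.gcd_dvd_left n k, hn0'⟩)]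
    refine Finset.sum_congr rfl fun d hd => ?_
    rw [Nat.totient_div_of_dvd (Nat.dvd_of_mem_divisors hd)]
    trans (∑ _k ∈ (range n).filter (fun k => Nat.gcd n k = d), m ^ d)
    · exact Finset.sum_congr rfl fun k hk => by rw [(Finset.mem_filter.1 hk).2]
    · rw [Finset.sum_const, smul_eq_mul]
  -- n as a totient sum
  have htot : (n : ℕ) = ∑ d ∈ n.divisors, Nat.totient (n / d) := by
    conv_lhs => rw [← Nat.sum_totient n]
    rw [← Nat.sum_div_divisors n Nat.totient]
  -- divisibility of the difference, in ℤ
  have hdvd : (2 : ℤ) ^ (a + 1) ∣ (N : ℤ) * n - n := by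
    have hcast : (N : ℤ) * n = ∑ d ∈ n.divisors, (Nat.totient (n / d) : ℤ) * (m : ℤ) ^ d := by
      have := congrArg (fun t : ℕ => (t : ℤ)) (hB.trans hgroup)
      push_cast at this; exact this
    have hB2 : (n : ℤ) = ∑ d ∈ n.divisors, (Nat.totient (n / d) : ℤ) := by
      have := congrArg (fun t : ℕ => (t : ℤ)) htot
      push_cast at this; exact this
    have key : (N : ℤ) * n - n = ∑ d ∈ n.divisors, (Nat.totient (n / d) : ℤ) * ((m : ℤ) ^ d - 1) := by
      rw [hcast, hB2, ← Finset.sum_sub_distrib]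
      exact Finset.sum_congr rfl fun d _ => by ring
    rw [key]
    refine Finset.dvd_sum fun d hd => ?_
    have hd' := Nat.dvd_of_mem_divisors hd
    have hd0 : d ≠ 0 := by
      rintro rfl; exact hn0' (Nat.eq_zero_of_zero_dvd hd')
    have := term_dvd m n d hm hn0' hd' hd0
    have hm1 : 1 ≤ m ^ d := Nat.one_le_pow _ _ (by omega)
    have : (2 : ℤ) ^ (a + 1) ∣ (Nat.totient (n / d) * (m ^ d - 1) : ℕ) := by
      exact_mod_cast Int.natCast_dvd_natCast.2 this
    rwa [Nat.cast_mul, Nat.cast_sub hm1, Nat.cast_pow, Nat.cast_one] at this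
  -- conclude: n = 2^a * q with q odd
  have hq : ¬ 2 ∣ ordCompl[2] n := Nat.not_dvd_ordCompl Nat.prime_two hn0'
  have hnfac : n = 2 ^ a * ordCompl[2] n := (Nat.ordProj_mul_ordCompl_eq_self n 2).symm
  set q := ordCompl[2] n with hqdef
  have : (2 : ℤ) ^ (a + 1) ∣ 2 ^ a * q * ((N : ℤ) - 1) := by
    have : (N : ℤ) * n - n = (n : ℤ) * ((N : ℤ) - 1) := by ring
    rw [this] at hdvd
    rw [show ((n : ℤ)) = 2 ^ a * q by exact_mod_cast hnfac] at hdvd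
    exact hdvd
  have h2 : (2 : ℤ) ∣ q * ((N : ℤ) - 1) := by
    have h2a : (2 : ℤ) ^ a ≠ 0 := by positivity
    rcases this with ⟨c, hc⟩
    refine ⟨c, ?_⟩
    have : (2:ℤ) ^ a * (q * ((N : ℤ) - 1)) = 2 ^ a * (2 * c) := by
      linear_combination hc
    exact mul_left_cancel₀ h2a this
  have hq2 : ¬ (2 : ℤ) ∣ (q : ℤ) := by exact_mod_cast hq
  have : (2 : ℤ) ∣ (N : ℤ) - 1 :=
    ((Int.prime_two.dvd_mul.mp h2).resolve_left hq2)
  rcases this with ⟨c, hc⟩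
  rw [Nat.odd_iff]
  omega

lemma cycShift_apply {α : Type*} {n : ℕ} [NeZero n] (x : Fin n → α) (i : Fin n) :
    cycShift x i = x (i + 1) := by
  have hi := i.isLt
  unfold cycShift
  split_ifs with h
  · congr 1; apply Fin.ext; rw [Fin.add_def, Fin.val_one' n]
    show (i : ℕ) + 1 = ((i : ℕ) + 1 % n) % n
    have h2 : 1 % n = 1 := Nat.mod_eq_of_lt (by omega)
    rw [h2, Nat.mod_eq_of_lt h]
  · congr 1; apply Fin.ext; rw [Fin.add_def, Fin.val_one' n]
    show 0 = ((i : ℕ) + 1 % n) % n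
    rcases Nat.lt_or_ge 1 n with h2 | h2
    · rw [Nat.mod_eq_of_lt h2, show (i : ℕ) + 1 = n by omega, Nat.mod_self]
    · have hn1 : n = 1 := by omega
      subst hn1
      simp

section main
variable {n : ℕ} {A : Type} [Fintype A] [DecidableEq A]

lemma shift_pow_apply [NeZero n] (s : Equiv.Perm (Fin n → A)) (hs : ∀ x, s x = cycShift x)
    (j : ℕ) (x : Fin n → A) (i : Fin n) : (s ^ j) x i = x (i + (j : Fin n)) := by
  induction j generalizing x i with
  | zero => simp
  | succ j ih =>
    rw [pow_succ, Equiv.Perm.mul_apply]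
    calc (s ^ j) (s x) i = (s x) (i + (j : Fin n)) := ih _ _
    _ = cycShift x (i + (j : Fin n)) := by rw [hs]
    _ = x (i + (j : Fin n) + 1) := cycShift_apply x _
    _ = x (i + ((j + 1 : ℕ) : Fin n)) := by push_cast; rw [add_assoc]

lemma shift_pow_n [NeZero n] (s : Equiv.Perm (Fin n → A)) (hs : ∀ x, s x = cycShift x) :
    s ^ n = 1 := by
  ext x i
  rw [shift_pow_apply s hs n x i]
  simp [Fin.natCast_self]

lemma invar_mul [NeZero n] (x : Fin n → A) (c : ℕ) (hx : ∀ i, x (i + (c : Fin n)) = x i)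
    (e : ℕ) : ∀ i, x (i + ((e * c : ℕ) : Fin n)) = x i := by
  induction e with
  | zero => intro i; simp
  | succ e ih =>
    intro i
    have hcast : (((e + 1) * c : ℕ) : Fin n) = ((e * c : ℕ) : Fin n) + (c : Fin n) := by
      push_cast; ring
    rw [hcast, ← add_assoc, show i + ((e * c : ℕ) : Fin n) + (c : Fin n)
        = (i + ((e * c : ℕ) : Fin n)) + (c : Fin n) from rfl, hx, ih]

/-- Counting functions invariant under shift by a divisor `d` of `n`. -/
lemma card_invar [NeZero n] (d : ℕ) (hd : d ∣ n) (hd0 : 0 < d) :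
    Nat.card {x : Fin n → A | ∀ i, x (i + (d : Fin n)) = x i} = Fintype.card A ^ d := by
  have hn0 : 0 < n := Nat.pos_of_ne_zero (NeZero.ne n)
  have hdn : d ≤ n := Nat.le_of_dvd hn0 hd
  rcases eq_or_lt_of_le hdn with rfl | hdlt
  · -- d = n : condition trivial
    have : {x : Fin d → A | ∀ i, x (i + (d : Fin d)) = x i} = Set.univ := by
      ext x; simp [Fin.natCast_self]
    rw [this]
    calc Nat.card (Set.univ : Set (Fin d → A)) = Nat.card (Fin d → A) :=
          Nat.card_congr (Equiv.Set.univ _)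
    _ = _ := by rw [Nat.card_eq_fintype_card, Fintype.card_fun, Fintype.card_fin]
  · -- d < n
    have hvald : ((d : Fin n) : ℕ) = d := by
      rw [Fin.val_natCast, Nat.mod_eq_of_lt hdlt]
    -- key : invariant functions are determined by their first d values
    have key : ∀ x : Fin n → A, (∀ i, x (i + (d : Fin n)) = x i) →
        ∀ i : Fin n, x i = x ⟨(i : ℕ) % d, lt_of_lt_of_le (Nat.mod_lt _ hd0) hdn⟩ := by
      intro x hx i
      have hsplit : (i : ℕ) = (i : ℕ) % d + (i : ℕ) / d * d := (Nat.mod_add_div' _ _).symm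
      have : i = (⟨(i : ℕ) % d, lt_of_lt_of_le (Nat.mod_lt _ hd0) hdn⟩ : Fin n)
          + (((i : ℕ) / d * d : ℕ) : Fin n) := by
        apply Fin.ext
        rw [Fin.add_def, Fin.val_natCast]
        show (i : ℕ) = ((i : ℕ) % d + ((i : ℕ) / d * d) % n) % n
        calc (i : ℕ) = ((i : ℕ) % d + (i : ℕ) / d * d) % n := by
              rw [← hsplit]; exact (Nat.mod_eq_of_lt i.isLt).symm
        _ = ((i : ℕ) % d % n + ((i : ℕ) / d * d) % n) % n := by rw [Nat.add_mod]
        _ = ((i : ℕ) % d + ((i : ℕ) / d * d) % n) % n := by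
              rw [Nat.mod_eq_of_lt (lt_of_lt_of_le (Nat.mod_lt _ hd0) hdn)]
      conv_lhs => rw [this]
      exact invar_mul x d hx ((i : ℕ) / d) _
    let E : {x : Fin n → A // ∀ i, x (i + (d : Fin n)) = x i} ≃ (Fin d → A) :=
      { toFun := fun x => fun t => x.1 ⟨(t : ℕ), lt_of_lt_of_le t.isLt hdn⟩
        invFun := fun y =>
          ⟨fun i => y ⟨(i : ℕ) % d, Nat.mod_lt _ hd0⟩, by
            intro i
            have hval : ((i + (d : Fin n) : Fin n) : ℕ) % d = (i : ℕ) % d := by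
              rw [Fin.add_def, hvald, Nat.mod_mod_of_dvd _ hd, Nat.add_mod_right]
            exact congrArg y (Fin.ext hval)⟩
        left_inv := by
          intro x
          apply Subtype.ext
          funext i
          show x.1 ⟨((⟨(i : ℕ) % d, _⟩ : Fin d) : ℕ), _⟩ = x.1 i
          rw [key x.1 x.2 i]
        right_inv := by
          intro y
          funext t
          show y ⟨((⟨(t : ℕ), _⟩ : Fin n) : ℕ) % d, _⟩ = y t
          congr 1
          apply Fin.ext
          show (t : ℕ) % d = (t : ℕ)
          exact Nat.mod_eq_of_lt t.isLt }
    have h1 : Nat.card {x : Fin n → A // ∀ i, x (i + (d : Fin n)) = x i}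
        = Nat.card (Fin d → A) := Nat.card_congr E
    have h2 : Nat.card (Fin d → A) = Fintype.card A ^ d := by
      rw [Nat.card_eq_fintype_card, Fintype.card_fun, Fintype.card_fin]
    exact h1.trans h2

lemma card_fixedBy [NeZero n] (s : Equiv.Perm (Fin n → A)) (hs : ∀ x, s x = cycShift x)
    (j : ℕ) :
    Nat.card (MulAction.fixedBy (Fin n → A) (s ^ j)) = Fintype.card A ^ (Nat.gcd n j) := by
  have hn0 : 0 < n := Nat.pos_of_ne_zero (NeZero.ne n)
  set d := Nat.gcd n j with hddef
  have hdn : d ∣ n := Nat.gcd_dvd_left n j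
  have hdj : d ∣ j := Nat.gcd_dvd_right n j
  have hd0 : 0 < d := Nat.gcd_pos_of_pos_left _ hn0
  have hset : MulAction.fixedBy (Fin n → A) (s ^ j)
      = {x : Fin n → A | ∀ i, x (i + (d : Fin n)) = x i} := by
    ext x
    simp only [MulAction.mem_fixedBy, Set.mem_setOf_eq, Equiv.Perm.smul_def]
    constructor
    · intro hfix i
      have hx : ∀ i, x (i + (j : Fin n)) = x i := fun i' => by
        conv_rhs => rw [← hfix]
        exact (shift_pow_apply s hs j x i').symm
      -- Bezout: d ≡ bn * j (mod n) for some bn : ℕ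
      obtain ⟨bn, hbn⟩ : ∃ bn : ℕ, (bn * j) % n = d % n := by
        have hbez : (d : ℤ) = n * Nat.gcdA n j + j * Nat.gcdB n j := Nat.gcd_eq_gcd_ab n j
        set B : ℤ := Nat.gcdB n j
        have hn0' : (n : ℤ) ≠ 0 := by exact_mod_cast hn0.ne'
        set b : ℤ := B % n with hb
        have hb0 : 0 ≤ b := Int.emod_nonneg B hn0'
        refine ⟨b.toNat, ?_⟩
        have h1 : (b.toNat : ℤ) = b := Int.toNat_of_nonneg hb0
        have hmod : ((b.toNat * j : ℕ) : ℤ) ≡ (d : ℤ) [ZMOD (n : ℕ)] := by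
          push_cast
          rw [h1]
          have hBb : b ≡ B [ZMOD (n : ℕ)] := Int.emod_emod_of_dvd B dvd_rfl
          calc b * (j : ℤ) ≡ B * j [ZMOD (n : ℕ)] := hBb.mul_right _
          _ ≡ (d : ℤ) [ZMOD (n : ℕ)] :=
                (Int.modEq_iff_dvd.2 ⟨-(Nat.gcdA n j), by rw [hbez]; ring⟩).symm
        rw [Int.natCast_modEq_iff] at hmod
        exact hmod
      have hdcast : (d : Fin n) = ((bn * j : ℕ) : Fin n) := by
        apply Fin.ext
        rw [Fin.val_natCast, Fin.val_natCast, hbn]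
      rw [hdcast]
      exact invar_mul x j hx bn i
    · intro hx
      funext i
      rw [shift_pow_apply s hs j x i]
      obtain ⟨e, he⟩ := hdj
      rw [show (j : Fin n) = ((e * d : ℕ) : Fin n) from
        congrArg (Nat.cast : ℕ → Fin n) (he.trans (mul_comm d e))]
      exact invar_mul x d hx e i
  rw [hset]
  exact card_invar d hdn hd0

lemma order_shift [NeZero n] (s : Equiv.Perm (Fin n → A)) (hs : ∀ x, s x = cycShift x)
    (hA2 : 1 < Fintype.card A) : orderOf s = n := by
  have hn0 : 0 < n := Nat.pos_of_ne_zero (NeZero.ne n)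
  have hpow : s ^ n = 1 := shift_pow_n s hs
  have hdvd : orderOf s ∣ n := orderOf_dvd_of_pow_eq_one hpow
  have hfin : IsOfFinOrder s := isOfFinOrder_iff_pow_eq_one.2 ⟨n, hn0, hpow⟩
  have hk0 : 0 < orderOf s := hfin.orderOf_pos
  by_contra hne
  have hklt : orderOf s < n := lt_of_le_of_ne (Nat.le_of_dvd hn0 hdvd) hne
  set k := orderOf s with hk
  obtain ⟨a, b, hab⟩ := Fintype.exists_pair_of_one_lt_card hA2
  set x : Fin n → A := fun t => if t = (k : Fin n) then a else b with hx
  have h1 : (s ^ k) x 0 = x 0 := by rw [pow_orderOf_eq_one s]; rfl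
  rw [shift_pow_apply s hs k x 0, zero_add] at h1
  have hkval : ((k : Fin n) : ℕ) = k := by rw [Fin.val_natCast, Nat.mod_eq_of_lt hklt]
  have hkne : (k : Fin n) ≠ 0 := by
    intro hc
    rw [← Fin.val_eq_val, hkval] at hc
    simp at hc
    omega
  have hxk : x (k : Fin n) = a := if_pos rfl
  have hx0 : x 0 = b := if_neg fun h => hkne h.symm
  rw [hxk, hx0] at h1
  exact hab h1

/-- if `m ≡ 1 (mod 4)` and `n` is even, then the necklace count
`N(n,m)` (the number of orbits of cyclic rotation on `Σ^n`) is odd. -/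
theorem necklace_count_odd (m n : ℕ) (hm : m % 4 = 1) (hn : Even n) (hn0 : 0 < n)
    (A : Type) [Fintype A] [DecidableEq A] (hA : Fintype.card A = m)
    (s : Equiv.Perm (Fin n → A)) (hs : ∀ x, s x = cycShift x) :
    Odd (Nat.card (MulAction.orbitRel.Quotient (Subgroup.zpowers s) (Fin n → A))) := by
  classical
  haveI : NeZero n := ⟨hn0.ne'⟩
  rcases eq_or_lt_of_le (show 1 ≤ m by omega) with hm1 | hm2
  · -- m = 1 : everything is trivial
    have hcard : Fintype.card A = 1 := by rw [hA, ← hm1]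
    haveI : Subsingleton A := Fintype.card_le_one_iff_subsingleton.mp (le_of_eq hcard)
    haveI hne : Nonempty A := Fintype.card_pos_iff.mp (by rw [hcard]; norm_num)
    haveI : Subsingleton (Fin n → A) := by infer_instance
    haveI : Nonempty (Fin n → A) := by infer_instance
    have h1 : Nat.card (MulAction.orbitRel.Quotient (Subgroup.zpowers s) (Fin n → A)) = 1 := by
      rw [Nat.card_eq_one_iff_unique]
      constructor
      · exact inferInstance
      · exact ⟨⟦Classical.arbitrary _⟧⟩
    rw [h1]; exact odd_one
  · have hA2 : 1 < Fintype.card A := by rw [hA]; exact hm2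
    have horder : orderOf s = n := order_shift s hs hA2
    set G := Subgroup.zpowers s with hG
    haveI : Fintype G := Fintype.ofFinite _
    haveI : Fintype (Quotient (MulAction.orbitRel G (Fin n → A))) := Fintype.ofFinite _
    haveI : ∀ g : G, Fintype (MulAction.fixedBy (Fin n → A) g) := fun g => Fintype.ofFinite _
    have hburn := MulAction.sum_card_fixedBy_eq_card_orbits_mul_card_group (G := G) (X := (Fin n → A))
    -- rewrite RHS group card
    have hcardG : Fintype.card G = n := by
      rw [← Nat.card_eq_fintype_card, Nat.card_zpowers, horder]
    -- reindex LHS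
    have hfin : IsOfFinOrder s :=
      isOfFinOrder_iff_pow_eq_one.2 ⟨n, hn0, shift_pow_n s hs⟩
    let e : Fin (orderOf s) ≃ G := finEquivZPowers hfin
    have hsum1 : (∑ g : G, Fintype.card (MulAction.fixedBy (Fin n → A) g))
        = ∑ i : Fin (orderOf s), Fintype.card (MulAction.fixedBy (Fin n → A) (e i)) :=
      (Equiv.sum_comp e _).symm
    have hsum2 : ∀ i : Fin (orderOf s),
        Fintype.card (MulAction.fixedBy (Fin n → A) (e i)) = m ^ Nat.gcd n (i : ℕ) := by
      intro i
      have he : (e i : Equiv.Perm (Fin n → A)) = s ^ (i : ℕ) := rfl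
      have hfb : MulAction.fixedBy (Fin n → A) (e i) = MulAction.fixedBy (Fin n → A) (s ^ (i : ℕ)) := by
        ext x
        have hsm : e i • x = (s ^ (i : ℕ)) • x := by rw [← he]; rfl
        simp only [MulAction.mem_fixedBy, hsm]
      rw [← Nat.card_eq_fintype_card, hfb, card_fixedBy s hs (i : ℕ), hA]
    have hsum3 : (∑ g : G, Fintype.card (MulAction.fixedBy (Fin n → A) g))
        = ∑ k ∈ Finset.range n, m ^ Nat.gcd n k := by
      rw [hsum1, Finset.sum_congr rfl (fun i _ => hsum2 i)]
      rw [Fin.sum_univ_eq_sum_range (fun k => m ^ Nat.gcd n k) (orderOf s), horder]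
    have hNat : Nat.card (MulAction.orbitRel.Quotient G (Fin n → A))
        = Fintype.card (Quotient (MulAction.orbitRel G (Fin n → A))) := Nat.card_eq_fintype_card
    rw [hsum3, hcardG] at hburn
    exact main_arith m n _ hm hn hn0 (by rw [hNat, hburn])

end main
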